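/- Let X and U be Banach spaces, let the family {A(t)}_{t≥0} generate a strongly continuous evolution family {W(t,s)}_{t≥s≥0} on X, let B∈C(ℝ≥0,L(U,X)) with ‖B‖_∞ := sup_{t≥0}‖B(t)‖ < ∞, and consider the linear system whose trajectories are φ(t,t₀,x₀,u) = W(t,t₀)x₀ + ∫_{t₀}^{t} W(t,τ)B(τ)u(τ)dτ for inputs u∈PC(ℝ≥0,U). Then the following are equivalent: (i) the system is ISS; (ii) the system is 0-UGAS; (iii) the system is iISS; (iv) {W(t,s)} is uniformly asymptotically stable; (v) {W(t,s)} is uniformly exponentially stable. -/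

import Mathlib

open Filter Topology Set MeasureTheory
open scoped RealInnerProductSpace

noncomputable section

/-- Class `𝒦`: continuous, strictly increasing on `[0,∞)`, vanishing at `0`. -/
structure ClassK (g : ℝ → ℝ) : Prop where
  cont : ContinuousOn g (Set.Ici 0)
  mono : StrictMonoOn g (Set.Ici 0)
  zero : g 0 = 0
  nonneg : ∀ r : ℝ, 0 ≤ r → 0 ≤ g r

/-- Class `𝒦∞`: unbounded class-`𝒦` functions. -/
structure ClassKInf (g : ℝ → ℝ) : Prop where
  toClassK : ClassK g
  unbounded : ∀ M : ℝ, ∃ r : ℝ, 0 ≤ r ∧ M < g r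

/-- Class `𝒫`: positive definite functions. -/
structure ClassPD (g : ℝ → ℝ) : Prop where
  cont : ContinuousOn g (Set.Ici 0)
  zero : g 0 = 0
  pos : ∀ r : ℝ, 0 < r → 0 < g r

/-- Class `𝒦ℒ`. -/
structure ClassKL (b : ℝ → ℝ → ℝ) : Prop where
  classK : ∀ t : ℝ, 0 ≤ t → ClassK (fun r => b r t)
  contL : ∀ r : ℝ, 0 < r → ContinuousOn (fun t => b r t) (Set.Ici 0)
  antiL : ∀ r : ℝ, 0 < r → StrictAntiOn (fun t => b r t) (Set.Ici 0)
  tendstoL : ∀ r : ℝ, 0 < r → Tendsto (fun t => b r t) atTop (nhds 0)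

/-- Globally bounded, piecewise right-continuous input: bounded, right-continuous
everywhere, and with only finitely many discontinuities in every compact interval. -/
structure IsPC {U : Type*} [NormedAddCommGroup U] (u : ℝ → U) : Prop where
  bounded : ∃ C : ℝ, ∀ s : ℝ, ‖u s‖ ≤ C
  rightCont : ∀ t : ℝ, ContinuousWithinAt u (Set.Ici t) t
  locFinite : ∀ a b : ℝ, {s ∈ Set.Icc a b | ¬ ContinuousAt u s}.Finite

/-- The sup-norm `sup_{s ≥ 0} ‖u s‖` of an input. -/
def pcNorm {U : Type*} [NormedAddCommGroup U] (u : ℝ → U) : ℝ :=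
  sSup ((fun s => ‖u s‖) '' Set.Ici 0)

/-- Strongly continuous evolution family `{W(t,s)}_{t ≥ s ≥ 0}`. -/
structure EvolutionFamily {X : Type*} [NormedAddCommGroup X] [NormedSpace ℝ X]
    (W : ℝ → ℝ → X →L[ℝ] X) : Prop where
  idOn : ∀ t : ℝ, 0 ≤ t → ∀ x : X, W t t x = x
  comp : ∀ t r s : ℝ, 0 ≤ s → s ≤ r → r ≤ t → ∀ x : X, W t s x = W t r (W r s x)
  strongCont : ∀ x : X,
    ContinuousOn (fun p : ℝ × ℝ => W p.1 p.2 x) {p : ℝ × ℝ | 0 ≤ p.2 ∧ p.2 ≤ p.1}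

/-- Uniform stability of an evolution family. -/
def UniformlyStable {X : Type*} [NormedAddCommGroup X] [NormedSpace ℝ X]
    (W : ℝ → ℝ → X →L[ℝ] X) : Prop :=
  ∃ N : ℝ, 0 < N ∧ ∀ t0 t : ℝ, 0 ≤ t0 → t0 ≤ t → ‖W t t0‖ ≤ N

/-- Uniform attractivity of an evolution family. -/
def UniformlyAttractive {X : Type*} [NormedAddCommGroup X] [NormedSpace ℝ X]
    (W : ℝ → ℝ → X →L[ℝ] X) : Prop :=
  ∀ ε : ℝ, 0 < ε → ∃ T : ℝ, ∀ t0 t : ℝ, 0 ≤ t0 → t0 + T ≤ t → ‖W t t0‖ ≤ ε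

/-- Uniform exponential stability of an evolution family. -/
def UniformlyExpStable {X : Type*} [NormedAddCommGroup X] [NormedSpace ℝ X]
    (W : ℝ → ℝ → X →L[ℝ] X) : Prop :=
  ∃ k w : ℝ, 0 < k ∧ 0 < w ∧
    ∀ s t : ℝ, 0 ≤ s → s ≤ t → ‖W t s‖ ≤ k * Real.exp (-w * (t - s))

/-- Mild trajectory of the linear system `ẋ = A(t)x + B(t)u(t)`. -/
def lphi {X U : Type*} [NormedAddCommGroup X] [NormedSpace ℝ X]
    [NormedAddCommGroup U] [NormedSpace ℝ U]
    (W : ℝ → ℝ → X →L[ℝ] X) (B : ℝ → U →L[ℝ] X) (u : ℝ → U)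
    (t t0 : ℝ) (x0 : X) : X :=
  W t t0 x0 + ∫ τ in t0..t, W t τ (B τ (u τ))



section AuxLemmas

private lemma aux_op_le_of_unit {X : Type*} [NormedAddCommGroup X] [NormedSpace ℝ X]
    (f : X →L[ℝ] X) {C : ℝ} (hC : 0 ≤ C) (h : ∀ x : X, ‖x‖ = 1 → ‖f x‖ ≤ C) :
    ‖f‖ ≤ C := by
  refine f.opNorm_le_bound hC (fun x => ?_)
  rcases eq_or_ne x 0 with h0 | h0
  · simp [h0]
  · have hx : ‖x‖ ≠ 0 := norm_ne_zero_iff.2 h0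
    have h1 : ‖(‖x‖⁻¹ • x)‖ = 1 := by
      rw [norm_smul, norm_inv, norm_norm, inv_mul_cancel₀ hx]
    calc ‖f x‖ = ‖x‖ * ‖f (‖x‖⁻¹ • x)‖ := by
          rw [f.map_smul, norm_smul, norm_inv, norm_norm]; field_simp
      _ ≤ ‖x‖ * C := mul_le_mul_of_nonneg_left (h _ h1) (norm_nonneg x)
      _ = C * ‖x‖ := mul_comm _ _

private lemma aux_expKL {k w : ℝ} (hk : 0 < k) (hw : 0 < w) :
    ClassKL (fun r s => k * r * Real.exp (-w * s)) := by
  constructor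
  · intro t ht
    constructor
    · exact Continuous.continuousOn (by continuity)
    · intro a _ b _ hab
      have he : 0 < Real.exp (-w * t) := Real.exp_pos _
      exact mul_lt_mul_of_pos_right (mul_lt_mul_of_pos_left hab hk) he
    · simp
    · intro r hr
      have := Real.exp_pos (-w * t)
      positivity
  · intro r hr; exact Continuous.continuousOn (by continuity)
  · intro r hr a _ b _ hab
    have : Real.exp (-w * b) < Real.exp (-w * a) := by
      apply Real.exp_lt_exp.2; nlinarith
    exact mul_lt_mul_of_pos_left this (mul_pos hk hr)
  · intro r hr
    have h1 : Tendsto (fun t : ℝ => -w * t) atTop atBot :=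
      Tendsto.const_mul_atTop_of_neg (by linarith) tendsto_id
    have h2 := (Real.tendsto_exp_atBot.comp h1).const_mul (k * r)
    simpa [Function.comp, mul_assoc] using h2

private lemma aux_le_pcNorm {U : Type*} [NormedAddCommGroup U] {u : ℝ → U} (hu : IsPC u)
    {s : ℝ} (hs : 0 ≤ s) : ‖u s‖ ≤ pcNorm u := by
  obtain ⟨C, hC⟩ := hu.bounded
  exact le_csSup ⟨C, fun y ⟨x, _, hx⟩ => hx ▸ hC x⟩ ⟨s, hs, rfl⟩

private lemma aux_pcNorm_nonneg {U : Type*} [NormedAddCommGroup U] {u : ℝ → U}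
    (hu : IsPC u) : 0 ≤ pcNorm u := le_trans (norm_nonneg _) (aux_le_pcNorm hu le_rfl)

private lemma aux_isPC_zero {U : Type*} [NormedAddCommGroup U] :
    IsPC (fun _ : ℝ => (0 : U)) := by
  refine ⟨⟨0, by simp⟩, fun t => continuousWithinAt_const, fun a b => ?_⟩
  apply Set.Finite.subset (Set.finite_empty)
  intro s hs
  exact absurd continuousAt_const hs.2

private lemma aux_pcNorm_zero {U : Type*} [NormedAddCommGroup U] :
    pcNorm (fun _ : ℝ => (0 : U)) = 0 := by
  unfold pcNorm
  have : ((fun s : ℝ => ‖(0:U)‖) '' Set.Ici 0) = {0} := by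
    simp only [norm_zero]
    exact Set.Nonempty.image_const (nonempty_Ici) 0
  rw [this, csSup_singleton]

private lemma aux_intervalIntegrable_norm {U : Type*} [NormedAddCommGroup U] {u : ℝ → U}
    (hu : IsPC u) (a b : ℝ) : IntervalIntegrable (fun s => ‖u s‖) volume a b := by
  have key : ∀ a b : ℝ, a ≤ b → IntervalIntegrable (fun s => ‖u s‖) volume a b := by
    intro a b hab
    rw [intervalIntegrable_iff_integrableOn_Ioc_of_le hab]
    obtain ⟨C, hC⟩ := hu.bounded
    have hfin := hu.locFinite a b
    set S := {s ∈ Set.Icc a b | ¬ ContinuousAt u s} with hS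
    have hmeas : AEStronglyMeasurable (fun s => ‖u s‖) (volume.restrict (Set.Ioc a b)) := by
      have h1 : ContinuousOn (fun s => ‖u s‖) (Set.Ioc a b \ S) := by
        intro x hx
        have hcx : ContinuousAt u x := by
          by_contra hc
          exact hx.2 ⟨Set.Ioc_subset_Icc_self hx.1, hc⟩
        exact (hcx.norm).continuousWithinAt
      have h2 : MeasurableSet (Set.Ioc a b \ S) := measurableSet_Ioc.diff hfin.measurableSet
      have h3 : AEMeasurable (fun s => ‖u s‖) (volume.restrict (Set.Ioc a b \ S)) :=
        h1.aemeasurable h2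
      have h4 : volume.restrict (Set.Ioc a b \ S) = volume.restrict (Set.Ioc a b) := by
        apply Measure.restrict_congr_set
        rw [MeasureTheory.diff_ae_eq_self]
        exact measure_mono_null Set.inter_subset_right (hfin.measure_zero volume)
      rw [h4] at h3
      exact h3.aestronglyMeasurable
    apply Integrable.mono' (integrable_const C) hmeas
    exact Filter.Eventually.of_forall fun x => by simpa using hC x
  rcases le_total a b with hab | hab
  · exact key a b hab
  · exact (key b a hab).symm

private lemma aux_integral_exp_decay {w t0 t : ℝ} (hw : 0 < w) :
    (∫ τ in t0..t, Real.exp (-w * (t - τ))) ≤ w⁻¹ := by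
  have hfe : (fun τ => Real.exp (-w * (t - τ)))
      = fun τ => Real.exp (-w * t) * Real.exp (w * τ) := by
    funext τ; rw [← Real.exp_add]; ring_nf
  rw [hfe, intervalIntegral.integral_const_mul]
  have h1 : (∫ τ in t0..t, Real.exp (w * τ)) = w⁻¹ • ∫ x in w*t0..w*t, Real.exp x :=
    intervalIntegral.integral_comp_mul_left Real.exp hw.ne'
  rw [h1, integral_exp]
  have e1 : Real.exp (-w * t) * Real.exp (w * t) = 1 := by
    rw [← Real.exp_add]; ring_nf; exact Real.exp_zero
  have e2 : 0 < Real.exp (-w * t) * Real.exp (w * t0) := by positivity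
  have hwi : 0 < w⁻¹ := by positivity
  rw [smul_eq_mul]
  nlinarith

private lemma aux_uas_to_ues {X : Type*} [NormedAddCommGroup X] [NormedSpace ℝ X]
    (W : ℝ → ℝ → X →L[ℝ] X)
    (hcomp : ∀ t r s : ℝ, 0 ≤ s → s ≤ r → r ≤ t → ∀ x : X, W t s x = W t r (W r s x))
    (N : ℝ) (hN : 0 < N) (hS : ∀ t0 t : ℝ, 0 ≤ t0 → t0 ≤ t → ‖W t t0‖ ≤ N)
    (T : ℝ) (hT : 0 < T) (hA : ∀ t0 t : ℝ, 0 ≤ t0 → t0 + T ≤ t → ‖W t t0‖ ≤ 1/2) :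
    UniformlyExpStable W := by
  have main : ∀ n : ℕ, ∀ s t : ℝ, 0 ≤ s → s + n * T ≤ t → ‖W t s‖ ≤ N * (1/2)^n := by
    intro n
    induction n with
    | zero => intro s t hs hst; simpa using hS s t hs (by simpa using hst)
    | succ n ih =>
      intro s t hs hst
      have hsT : 0 ≤ s + T := by linarith
      have hs'T : s + T + n * T ≤ t := by push_cast at hst ⊢; linarith
      have h1 : ‖W t (s + T)‖ ≤ N * (1/2)^n := ih (s+T) t hsT hs'T
      have h2 : ‖W (s+T) s‖ ≤ 1/2 := hA s (s+T) hs le_rfl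
      have hle : s ≤ s + T := by linarith
      have hle2 : s + T ≤ t := by
        have : (0:ℝ) ≤ n * T := by positivity
        linarith
      refine ContinuousLinearMap.opNorm_le_bound _ (by positivity) (fun x => ?_)
      rw [hcomp t (s+T) s hs hle hle2 x]
      calc ‖W t (s+T) (W (s+T) s x)‖ ≤ ‖W t (s+T)‖ * ‖W (s+T) s x‖ :=
            ContinuousLinearMap.le_opNorm _ _
        _ ≤ (N * (1/2)^n) * (‖W (s+T) s‖ * ‖x‖) := by
            apply mul_le_mul h1 (ContinuousLinearMap.le_opNorm _ _) (norm_nonneg _)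
              (by positivity)
        _ ≤ (N * (1/2)^n) * ((1/2) * ‖x‖) := by
            have := mul_le_mul_of_nonneg_right h2 (norm_nonneg x)
            apply mul_le_mul_of_nonneg_left this (by positivity)
        _ = N * (1/2)^(n+1) * ‖x‖ := by ring
  have hl2 : 0 < Real.log 2 := Real.log_pos (by norm_num)
  refine ⟨2*N, Real.log 2 / T, by positivity, div_pos hl2 hT, fun s t hs hst => ?_⟩
  set n := ⌊(t - s)/T⌋₊ with hn
  have hts : 0 ≤ (t - s)/T := div_nonneg (by linarith) hT.le
  have hfl : (n : ℝ) ≤ (t - s)/T := Nat.floor_le hts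
  have hfl2 : (t - s)/T < n + 1 := Nat.lt_floor_add_one _
  have hbound : ‖W t s‖ ≤ N * (1/2)^n := by
    apply main n s t hs
    have : (n : ℝ) * T ≤ t - s := by
      rw [← le_div_iff₀ hT] at *; linarith [hfl]
    linarith
  refine hbound.trans ?_
  have hexp : Real.exp (-(Real.log 2 / T) * (t - s)) = (2:ℝ) ^ (-((t-s)/T)) := by
    rw [Real.rpow_def_of_pos (by norm_num : (0:ℝ) < 2)]
    ring_nf
  rw [hexp]
  have h2p : ((2:ℝ)) ^ (-((n:ℝ)+1)) ≤ (2:ℝ) ^ (-((t-s)/T)) := by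
    apply Real.rpow_le_rpow_of_exponent_le (by norm_num)
    linarith
  have hval : ((2:ℝ)) ^ (-((n:ℝ)+1)) = (1/2 : ℝ)^(n+1) := by
    rw [show -((n:ℝ)+1) = -((n+1 : ℕ) : ℝ) by push_cast; ring,
      Real.rpow_neg (by norm_num : (0:ℝ) ≤ 2), Real.rpow_natCast, one_div, inv_pow]
  rw [hval] at h2p
  calc N * (1/2:ℝ)^n = 2 * N * ((1/2:ℝ)^(n+1)) := by rw [pow_succ]; ring
    _ ≤ 2 * N * (2:ℝ) ^ (-((t-s)/T)) := by
        apply mul_le_mul_of_nonneg_left h2p (by positivity)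

end AuxLemmas

/-- For linear time-varying systems with bounded input operators, ISS, 0-UGAS, iISS,
uniform asymptotic stability and uniform exponential stability of the evolution
family are all equivalent. -/
theorem stmt9 {X U : Type*} [NormedAddCommGroup X] [NormedSpace ℝ X] [CompleteSpace X]
    [NormedAddCommGroup U] [NormedSpace ℝ U]
    (W : ℝ → ℝ → X →L[ℝ] X) (hW : EvolutionFamily W)
    (B : ℝ → U →L[ℝ] X) (hBcont : Continuous B)
    (Bnorm : ℝ) (hB : IsLUB ((fun t => ‖B t‖) '' Set.Ici 0) Bnorm) :
    List.TFAE [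
      (∃ β : ℝ → ℝ → ℝ, ∃ γ : ℝ → ℝ, ClassKL β ∧ ClassK γ ∧
        ∀ t0 : ℝ, 0 ≤ t0 → ∀ x0 : X, ∀ u : ℝ → U, IsPC u → ∀ t : ℝ, t0 ≤ t →
          ‖lphi W B u t t0 x0‖ ≤ β ‖x0‖ (t - t0) + γ (pcNorm u)),
      (∃ β : ℝ → ℝ → ℝ, ClassKL β ∧
        ∀ t0 : ℝ, 0 ≤ t0 → ∀ x0 : X, ∀ t : ℝ, t0 ≤ t →
          ‖lphi W B (fun _ => (0 : U)) t t0 x0‖ ≤ β ‖x0‖ (t - t0)),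
      (∃ α : ℝ → ℝ, ∃ μ : ℝ → ℝ, ∃ β : ℝ → ℝ → ℝ, ClassKInf α ∧ ClassK μ ∧ ClassKL β ∧
        ∀ t0 : ℝ, 0 ≤ t0 → ∀ x0 : X, ∀ u : ℝ → U, IsPC u → ∀ t : ℝ, t0 ≤ t →
          ‖lphi W B u t t0 x0‖ ≤ β ‖x0‖ (t - t0) + α (∫ s in t0..t, μ ‖u s‖)),
      UniformlyStable W ∧ UniformlyAttractive W,
      UniformlyExpStable W ] := by
  -- basic facts
  have hBnn : 0 ≤ Bnorm := le_trans (norm_nonneg (B 0)) (hB.1 ⟨0, Set.self_mem_Ici, rfl⟩)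
  have hBle : ∀ τ : ℝ, 0 ≤ τ → ‖B τ‖ ≤ Bnorm := fun τ hτ => hB.1 ⟨τ, hτ, rfl⟩
  -- the convolution term bound machinery
  tfae_have 1 → 2 := by
    rintro ⟨β, γ, hβ, hγ, h⟩
    refine ⟨β, hβ, fun t0 ht0 x0 t ht => ?_⟩
    have := h t0 ht0 x0 _ aux_isPC_zero t ht
    rwa [aux_pcNorm_zero, hγ.zero, add_zero] at this
  tfae_have 3 → 2 := by
    rintro ⟨α, μ, β, hα, hμ, hβ, h⟩
    refine ⟨β, hβ, fun t0 ht0 x0 t ht => ?_⟩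
    have := h t0 ht0 x0 _ aux_isPC_zero t ht
    simpa [norm_zero, hμ.zero, hα.toClassK.zero] using this
  tfae_have 2 → 4 := by
    rintro ⟨β, hβ, h⟩
    have hlz : ∀ t t0 : ℝ, ∀ x0 : X,
        lphi W B (fun _ => (0:U)) t t0 x0 = W t t0 x0 := by
      intro t t0 x0; simp [lphi]
    have hW0 : ∀ t0 : ℝ, 0 ≤ t0 → ∀ x0 : X, ∀ t : ℝ, t0 ≤ t →
        ‖W t t0 x0‖ ≤ β ‖x0‖ (t - t0) := by
      intro t0 ht0 x0 t ht
      have := h t0 ht0 x0 t ht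
      rwa [hlz] at this
    have hunit : ∀ t0 t : ℝ, 0 ≤ t0 → t0 ≤ t → ‖W t t0‖ ≤ β 1 (t - t0) := by
      intro t0 t ht0 ht
      refine aux_op_le_of_unit _ ((hβ.classK (t - t0) (by linarith)).nonneg 1 zero_le_one)
        (fun x hx => ?_)
      have := hW0 t0 ht0 x t ht
      rwa [hx] at this
    have hβ10 : 0 < β 1 0 := by
      have hm := (hβ.classK 0 le_rfl).mono (Set.self_mem_Ici)
        (Set.mem_Ici.2 zero_le_one) zero_lt_one
      have hz := (hβ.classK 0 le_rfl).zero
      linarith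
    constructor
    · refine ⟨β 1 0, hβ10, fun t0 t ht0 ht => (hunit t0 t ht0 ht).trans ?_⟩
      rcases eq_or_lt_of_le (sub_nonneg.2 ht) with heq | hlt
      · rw [← heq]
      · exact le_of_lt ((hβ.antiL 1 one_pos) Set.self_mem_Ici
          (Set.mem_Ici.2 (by linarith)) hlt)
    · intro ε hε
      have hev : ∀ᶠ s in atTop, β 1 s < ε :=
        (hβ.tendstoL 1 one_pos).eventually_lt_const hε
      obtain ⟨T, hT⟩ := eventually_atTop.1 hev
      refine ⟨max T 0, fun t0 t ht0 htT => ?_⟩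
      have h1 : t0 ≤ t := by
        have := le_max_right T 0; linarith
      have h2 : T ≤ t - t0 := by
        have := le_max_left T 0; linarith
      exact (hunit t0 t ht0 h1).trans (hT _ h2).le
  tfae_have 4 → 5 := by
    rintro ⟨⟨N, hN, hS⟩, hA⟩
    obtain ⟨T0, hT0⟩ := hA (1/2) (by norm_num)
    have hT : (0:ℝ) < max T0 1 := lt_of_lt_of_le zero_lt_one (le_max_right T0 1)
    refine aux_uas_to_ues W hW.comp N hN hS (max T0 1) hT (fun t0 t h h2 => ?_)
    refine hT0 t0 t h ?_
    have := le_max_left T0 1; linarith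
  tfae_have 5 → 4 := by
    rintro ⟨k, w, hk, hw, h⟩
    constructor
    · refine ⟨k, hk, fun t0 t ht0 ht => (h t0 t ht0 ht).trans ?_⟩
      have hexp : Real.exp (-w * (t - t0)) ≤ 1 :=
        Real.exp_le_one_iff.mpr (by nlinarith)
      nlinarith
    · intro ε hε
      have h1 : Tendsto (fun s : ℝ => -w * s) atTop atBot :=
        Tendsto.const_mul_atTop_of_neg (by linarith) tendsto_id
      have htd : Tendsto (fun s : ℝ => k * Real.exp (-w * s)) atTop (nhds 0) := by
        have h2 := (Real.tendsto_exp_atBot.comp h1).const_mul k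
        simpa [Function.comp] using h2
      obtain ⟨T, hT⟩ := eventually_atTop.1 (htd.eventually_lt_const hε)
      refine ⟨max T 0, fun t0 t ht0 htT => ?_⟩
      have h1' : t0 ≤ t := by have := le_max_right T 0; linarith
      have h2' : T ≤ t - t0 := by have := le_max_left T 0; linarith
      exact (h t0 t ht0 h1').trans (hT _ h2').le
  tfae_have 5 → 1 := by
    rintro ⟨k, w, hk, hw, hues⟩
    have hγc : 0 < k * Bnorm / w + 1 := by positivity
    refine ⟨fun r s => k * r * Real.exp (-w * s), fun r => (k * Bnorm / w + 1) * r,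
      aux_expKL hk hw, ?_, ?_⟩
    · exact ⟨(continuous_const.mul continuous_id).continuousOn,
        fun a _ b _ hab => by exact mul_lt_mul_of_pos_left hab hγc,
        by simp, fun r hr => by positivity⟩
    · intro t0 ht0 x0 u hu t ht
      set M := pcNorm u with hM
      have hM0 : 0 ≤ M := aux_pcNorm_nonneg hu
      have term1 : ‖W t t0 x0‖ ≤ k * ‖x0‖ * Real.exp (-w * (t - t0)) := by
        calc ‖W t t0 x0‖ ≤ ‖W t t0‖ * ‖x0‖ := ContinuousLinearMap.le_opNorm _ _
          _ ≤ (k * Real.exp (-w * (t - t0))) * ‖x0‖ :=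
              mul_le_mul_of_nonneg_right (hues t0 t ht0 ht) (norm_nonneg _)
          _ = k * ‖x0‖ * Real.exp (-w * (t - t0)) := by ring
      have hbd : ∀ᵐ τ ∂volume.restrict (Set.uIoc t0 t),
          ‖W t τ (B τ (u τ))‖ ≤ (k * (Bnorm * M)) * Real.exp (-w * (t - τ)) := by
        rw [uIoc_of_le ht]
        refine Filter.eventually_of_mem (self_mem_ae_restrict measurableSet_Ioc)
          (fun τ hτ => ?_)
        have hτ0 : 0 ≤ τ := le_of_lt (lt_of_le_of_lt ht0 hτ.1)
        have w1 := hues τ t hτ0 hτ.2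
        have w2 : ‖B τ (u τ)‖ ≤ Bnorm * M := by
          calc ‖B τ (u τ)‖ ≤ ‖B τ‖ * ‖u τ‖ := ContinuousLinearMap.le_opNorm _ _
            _ ≤ Bnorm * M :=
              mul_le_mul (hBle τ hτ0) (aux_le_pcNorm hu hτ0) (norm_nonneg _) hBnn
        calc ‖W t τ (B τ (u τ))‖ ≤ ‖W t τ‖ * ‖B τ (u τ)‖ :=
              ContinuousLinearMap.le_opNorm _ _
          _ ≤ (k * Real.exp (-w * (t - τ))) * (Bnorm * M) := by
              apply mul_le_mul w1 w2 (norm_nonneg _)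
              positivity
          _ = (k * (Bnorm * M)) * Real.exp (-w * (t - τ)) := by ring
      have hgi : IntervalIntegrable
          (fun τ => (k * (Bnorm * M)) * Real.exp (-w * (t - τ))) volume t0 t :=
        Continuous.intervalIntegrable (continuous_const.mul ((Real.continuous_exp).comp (continuous_const.mul (continuous_const.sub continuous_id)))) _ _
      have h2 := intervalIntegral.norm_integral_le_abs_of_norm_le hbd hgi
      have hInn : 0 ≤ ∫ τ in t0..t, (k * (Bnorm * M)) * Real.exp (-w * (t - τ)) := by
        apply intervalIntegral.integral_nonneg ht
        intro τ _
        positivity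
      rw [abs_of_nonneg hInn, intervalIntegral.integral_const_mul] at h2
      have h3 : (k * (Bnorm * M)) * (∫ τ in t0..t, Real.exp (-w * (t - τ)))
          ≤ (k * (Bnorm * M)) * w⁻¹ :=
        mul_le_mul_of_nonneg_left (aux_integral_exp_decay hw) (by positivity)
      have h4 : (k * (Bnorm * M)) * w⁻¹ ≤ (k * Bnorm / w + 1) * M := by
        rw [div_eq_mul_inv]; nlinarith
      calc ‖lphi W B u t t0 x0‖
          ≤ ‖W t t0 x0‖ + ‖∫ τ in t0..t, W t τ (B τ (u τ))‖ := norm_add_le _ _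
        _ ≤ (k * ‖x0‖ * Real.exp (-w * (t - t0))) + (k * Bnorm / w + 1) * M := by
            have := (h2.trans h3).trans h4
            exact add_le_add term1 this
  tfae_have 5 → 3 := by
    rintro ⟨k, w, hk, hw, hues⟩
    have hαc : 0 < k * Bnorm + 1 := by positivity
    refine ⟨fun r => (k * Bnorm + 1) * r, fun r => r,
      fun r s => k * r * Real.exp (-w * s), ?_, ?_, aux_expKL hk hw, ?_⟩
    · refine ⟨⟨(continuous_const.mul continuous_id).continuousOn,
        fun a _ b _ hab => by exact mul_lt_mul_of_pos_left hab hαc,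
        by simp, fun r hr => by positivity⟩, fun C => ?_⟩
      refine ⟨max C 0 + 1, by positivity, ?_⟩
      have h1 := le_max_left C 0
      have h2 := le_max_right C 0
      nlinarith [mul_nonneg (mul_nonneg hk.le hBnn) (by linarith : (0:ℝ) ≤ max C 0 + 1)]
    · exact ⟨continuousOn_id, fun a _ b _ hab => hab, rfl, fun r hr => hr⟩
    · intro t0 ht0 x0 u hu t ht
      have term1 : ‖W t t0 x0‖ ≤ k * ‖x0‖ * Real.exp (-w * (t - t0)) := by
        calc ‖W t t0 x0‖ ≤ ‖W t t0‖ * ‖x0‖ := ContinuousLinearMap.le_opNorm _ _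
          _ ≤ (k * Real.exp (-w * (t - t0))) * ‖x0‖ :=
              mul_le_mul_of_nonneg_right (hues t0 t ht0 ht) (norm_nonneg _)
          _ = k * ‖x0‖ * Real.exp (-w * (t - t0)) := by ring
      have hbd : ∀ᵐ τ ∂volume.restrict (Set.uIoc t0 t),
          ‖W t τ (B τ (u τ))‖ ≤ (k * Bnorm) * ‖u τ‖ := by
        rw [uIoc_of_le ht]
        refine Filter.eventually_of_mem (self_mem_ae_restrict measurableSet_Ioc)
          (fun τ hτ => ?_)
        have hτ0 : 0 ≤ τ := le_of_lt (lt_of_le_of_lt ht0 hτ.1)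
        have w1 := hues τ t hτ0 hτ.2
        have hexp : Real.exp (-w * (t - τ)) ≤ 1 :=
          Real.exp_le_one_iff.mpr (by nlinarith [hτ.2])
        have w1' : ‖W t τ‖ ≤ k := by nlinarith [Real.exp_pos (-w * (t - τ))]
        have w2 : ‖B τ (u τ)‖ ≤ Bnorm * ‖u τ‖ := by
          calc ‖B τ (u τ)‖ ≤ ‖B τ‖ * ‖u τ‖ := ContinuousLinearMap.le_opNorm _ _
            _ ≤ Bnorm * ‖u τ‖ :=
              mul_le_mul_of_nonneg_right (hBle τ hτ0) (norm_nonneg _)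
        calc ‖W t τ (B τ (u τ))‖ ≤ ‖W t τ‖ * ‖B τ (u τ)‖ :=
              ContinuousLinearMap.le_opNorm _ _
          _ ≤ k * (Bnorm * ‖u τ‖) := by
              apply mul_le_mul w1' w2 (norm_nonneg _) hk.le
          _ = (k * Bnorm) * ‖u τ‖ := by ring
      have hgi : IntervalIntegrable (fun τ => (k * Bnorm) * ‖u τ‖) volume t0 t :=
        (aux_intervalIntegrable_norm hu t0 t).const_mul _
      have h2 := intervalIntegral.norm_integral_le_abs_of_norm_le hbd hgi
      have hInt0 : 0 ≤ ∫ τ in t0..t, ‖u τ‖ := by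
        apply intervalIntegral.integral_nonneg ht
        intro τ _; exact norm_nonneg _
      have hInn : 0 ≤ ∫ τ in t0..t, (k * Bnorm) * ‖u τ‖ := by
        apply intervalIntegral.integral_nonneg ht
        intro τ _; positivity
      rw [abs_of_nonneg hInn, intervalIntegral.integral_const_mul] at h2
      have h3 : (k * Bnorm) * (∫ τ in t0..t, ‖u τ‖)
          ≤ (k * Bnorm + 1) * (∫ τ in t0..t, ‖u τ‖) := by nlinarith
      calc ‖lphi W B u t t0 x0‖
          ≤ ‖W t t0 x0‖ + ‖∫ τ in t0..t, W t τ (B τ (u τ))‖ := norm_add_le _ _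
        _ ≤ (k * ‖x0‖ * Real.exp (-w * (t - t0)))
            + (k * Bnorm + 1) * (∫ τ in t0..t, ‖u τ‖) :=
            add_le_add term1 (h2.trans h3)
  tfae_finish
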